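/- Let d ≥ 1, m ≥ 1, and let Z = (Z_1, …, Z_d) be a measurable random vector with Z_l ≥ 0 almost surely, such that for every t ∈ [0,∞)^d with ∑_{l=1}^d t_l ≤ 1 one has P(∀ l, Z_l > t_l) ≥ (1 − ∑_{l=1}^d t_l)^{m−1}. Then E[∏_{l=1}^d Z_l] ≥ (m−1)! / (m+d−1)!, where the expectation is interpreted in [0,∞]. -/

import Mathlib

open MeasureTheory

lemma simplexSet_meas (d : ℕ) (s : ℝ) :
    MeasurableSet {t : Fin d → ℝ | (∀ l, 0 ≤ t l) ∧ ∑ l, t l ≤ s} := by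
  have h1 : {t : Fin d → ℝ | ∀ l, 0 ≤ t l} = ⋂ l, {t : Fin d → ℝ | 0 ≤ t l} := by
    ext t; simp
  have : {t : Fin d → ℝ | (∀ l, 0 ≤ t l) ∧ ∑ l, t l ≤ s}
      = (⋂ l, {t : Fin d → ℝ | 0 ≤ t l}) ∩ {t : Fin d → ℝ | ∑ l, t l ≤ s} := by
    rw [← h1]; rfl
  rw [this]
  exact (MeasurableSet.iInter fun l =>
      measurableSet_le measurable_const (measurable_pi_apply l)).inter
    (measurableSet_le (Finset.measurable_sum _ fun l _ => measurable_pi_apply l)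
      measurable_const)

lemma simplexInt (k : ℕ) : ∀ (d : ℕ) (s : ℝ), 0 ≤ s →
    ∫⁻ t : Fin d → ℝ, Set.indicator {t : Fin d → ℝ | (∀ l, 0 ≤ t l) ∧ ∑ l, t l ≤ s}
      (fun t => ENNReal.ofReal ((s - ∑ l, t l) ^ k)) t
    = ENNReal.ofReal (s ^ (k + d) * ((k.factorial : ℝ) / ((k + d).factorial : ℝ))) := by
  intro d
  induction d with
  | zero =>
    intro s hs
    have hv : (volume : Measure (Fin 0 → ℝ)) = Measure.dirac 0 := by
      rw [volume_pi, Measure.pi_of_empty]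
      congr 1
      exact funext fun a => isEmptyElim a
    rw [hv, lintegral_dirac]
    rw [Set.indicator_of_mem (by simp [hs])]
    rw [Nat.add_zero, div_self (by positivity), mul_one]
    simp
  | succ d ih =>
    intro s hs
    set c : ℝ := (k.factorial : ℝ) / ((k + d).factorial : ℝ) with hc
    have hc0 : 0 ≤ c := by positivity
    set F : (Fin (d+1) → ℝ) → ENNReal :=
      Set.indicator {t : Fin (d+1) → ℝ | (∀ l, 0 ≤ t l) ∧ ∑ l, t l ≤ s}
        (fun t => ENNReal.ofReal ((s - ∑ l, t l) ^ k)) with hF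
    have hFmeas : Measurable F := by
      apply Measurable.indicator _ (simplexSet_meas (d+1) s)
      exact (measurable_const.sub
        (Finset.measurable_sum _ fun l _ => measurable_pi_apply l)).pow_const k
        |>.ennreal_ofReal
    have hmp := (volume_preserving_piFinSuccAbove (fun _ : Fin (d+1) => ℝ) 0).symm
    have h1 : ∫⁻ t : Fin (d+1) → ℝ, F t
        = ∫⁻ p : ℝ × (Fin d → ℝ), F (Fin.cons p.1 p.2) := by
      rw [← hmp.lintegral_comp hFmeas]
      congr 1
      ext p
      congr 1
      show (Fin.insertNthEquiv (fun _ => ℝ) 0) p = Fin.cons p.1 p.2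
      rw [Fin.insertNthEquiv]
      simp [Fin.insertNth_zero]
    have hcons : Measurable fun p : ℝ × (Fin d → ℝ) => (Fin.cons p.1 p.2 : Fin (d+1) → ℝ) := by
      apply measurable_pi_iff.2
      intro l
      refine Fin.cases ?_ ?_ l
      · simpa using measurable_fst
      · intro j; simpa [Function.comp_def] using (measurable_pi_apply j).comp measurable_snd
    have h2 : ∫⁻ p : ℝ × (Fin d → ℝ), F (Fin.cons p.1 p.2)
        = ∫⁻ x : ℝ, ∫⁻ u : Fin d → ℝ, F (Fin.cons x u) := by
      exact lintegral_prod _ (hFmeas.comp hcons).aemeasurable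
    have hinner : ∀ x : ℝ, (∫⁻ u : Fin d → ℝ, F (Fin.cons x u))
        = Set.indicator (Set.Icc 0 s)
            (fun x => ENNReal.ofReal ((s - x) ^ (k + d) * c)) x := by
      intro x
      by_cases hx : x ∈ Set.Icc (0:ℝ) s
      · obtain ⟨hx0, hxs⟩ := hx
        have key : ∀ u : Fin d → ℝ, F (Fin.cons x u)
            = Set.indicator {u : Fin d → ℝ | (∀ l, 0 ≤ u l) ∧ ∑ l, u l ≤ s - x}
              (fun u => ENNReal.ofReal (((s - x) - ∑ l, u l) ^ k)) u := by
          intro u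
          have hsum : ∑ l, (Fin.cons x u : Fin (d+1) → ℝ) l = x + ∑ l, u l :=
            Fin.sum_cons x u
          have hmemiff : (Fin.cons x u : Fin (d+1) → ℝ) ∈
              {t : Fin (d+1) → ℝ | (∀ l, 0 ≤ t l) ∧ ∑ l, t l ≤ s}
              ↔ u ∈ {u : Fin d → ℝ | (∀ l, 0 ≤ u l) ∧ ∑ l, u l ≤ s - x} := by
            simp only [Set.mem_setOf_eq, hsum, Fin.forall_fin_succ, Fin.cons_zero,
              Fin.cons_succ]
            constructor
            · rintro ⟨⟨-, h2⟩, h3⟩; exact ⟨h2, by linarith⟩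
            · rintro ⟨h2, h3⟩; exact ⟨⟨hx0, h2⟩, by linarith⟩
          by_cases hmem : u ∈ {u : Fin d → ℝ | (∀ l, 0 ≤ u l) ∧ ∑ l, u l ≤ s - x}
          · rw [Set.indicator_of_mem hmem, hF,
              Set.indicator_of_mem (hmemiff.2 hmem)]
            rw [hsum]
            ring_nf
          · rw [Set.indicator_of_notMem hmem, hF,
              Set.indicator_of_notMem (fun h => hmem (hmemiff.1 h))]
        rw [Set.indicator_of_mem (Set.mem_Icc.mpr ⟨hx0, hxs⟩)]
        calc ∫⁻ u : Fin d → ℝ, F (Fin.cons x u)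
            = ∫⁻ u : Fin d → ℝ, Set.indicator
                {u : Fin d → ℝ | (∀ l, 0 ≤ u l) ∧ ∑ l, u l ≤ s - x}
                (fun u => ENNReal.ofReal (((s - x) - ∑ l, u l) ^ k)) u := by
              exact lintegral_congr key
          _ = ENNReal.ofReal ((s - x) ^ (k + d) * c) := ih (s - x) (by linarith)
      · rw [Set.indicator_of_notMem hx]
        have key : ∀ u : Fin d → ℝ, F (Fin.cons x u) = 0 := by
          intro u
          apply Set.indicator_of_notMem
          intro hmem
          obtain ⟨hpos, hsum⟩ := hmem
          rw [Fin.sum_cons] at hsum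
          have hx0 : 0 ≤ x := by simpa using hpos 0
          have hu : ∀ l, 0 ≤ u l := fun l => by simpa using hpos l.succ
          have : 0 ≤ ∑ l, u l := Finset.sum_nonneg fun l _ => hu l
          exact hx ⟨hx0, by linarith⟩
        simp [key]
    have h3 : ∫⁻ x : ℝ, Set.indicator (Set.Icc 0 s)
        (fun x => ENNReal.ofReal ((s - x) ^ (k + d) * c)) x
        = ENNReal.ofReal (∫ x in Set.Icc 0 s, (s - x) ^ (k + d) * c) := by
      rw [lintegral_indicator measurableSet_Icc]
      rw [← ofReal_integral_eq_lintegral_ofReal]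
      · exact (((continuous_const.sub continuous_id).pow _).mul
          continuous_const).integrableOn_Icc
      · filter_upwards [ae_restrict_mem measurableSet_Icc] with x hx
        have : 0 ≤ s - x := by linarith [hx.2]
        positivity
    have h4 : ∫ x in Set.Icc 0 s, (s - x) ^ (k + d) * c
        = s ^ (k + d + 1) / (k + d + 1) * c := by
      rw [integral_Icc_eq_integral_Ioc, ← intervalIntegral.integral_of_le hs]
      rw [intervalIntegral.integral_mul_const]
      congr 1
      rw [intervalIntegral.integral_comp_sub_left (fun y => y ^ (k + d)) s]
      simp only [sub_self, sub_zero]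
      rw [integral_pow]
      push_cast
      ring
    rw [h1, h2]
    rw [lintegral_congr hinner, h3, h4]
    congr 1
    have hfac : ((k + (d+1)).factorial : ℝ) = ((k + d : ℕ) + 1) * ((k + d).factorial : ℝ) := by
      have : k + (d + 1) = (k + d) + 1 := by ring
      rw [this, Nat.factorial_succ]
      push_cast; ring
    rw [hc, hfac]
    have h5 : ((k+d).factorial : ℝ) ≠ 0 := by positivity
    have h6 : ((k+d : ℕ) : ℝ) + 1 ≠ 0 := by positivity
    field_simp
    push_cast
    ring

theorem stmt_11 {Ω : Type*} [MeasurableSpace Ω] (P : Measure Ω) [IsProbabilityMeasure P]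
    (d m : ℕ) (hd : 1 ≤ d) (hm : 1 ≤ m) (Z : Ω → Fin d → ℝ)
    (hZmeas : Measurable Z)
    (hZnn : ∀ l, ∀ᵐ ω ∂P, 0 ≤ Z ω l)
    (htail : ∀ t : Fin d → ℝ, (∀ l, 0 ≤ t l) → ∑ l, t l ≤ 1 →
      ENNReal.ofReal ((1 - ∑ l, t l) ^ (m - 1)) ≤ P {ω | ∀ l, t l < Z ω l}) :
    ENNReal.ofReal ((Nat.factorial (m - 1) : ℝ) / (Nat.factorial (m + d - 1) : ℝ))
      ≤ ∫⁻ ω, ∏ l, ENNReal.ofReal (Z ω l) ∂P := by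
  set k := m - 1 with hk
  set A : Set (Ω × (Fin d → ℝ)) := {p | ∀ l, p.2 l ∈ Set.Ico 0 (Z p.1 l)} with hAdef
  have hA : MeasurableSet A := by
    have : A = ⋂ l, ({p : Ω × (Fin d → ℝ) | 0 ≤ p.2 l} ∩
        {p : Ω × (Fin d → ℝ) | p.2 l < Z p.1 l}) := by
      ext p; simp [hAdef, Set.mem_Ico, forall_and]
    rw [this]
    refine MeasurableSet.iInter fun l => MeasurableSet.inter ?_ ?_
    · exact measurableSet_le measurable_const (measurable_snd.eval)
    · exact measurableSet_lt (measurable_snd.eval) ((hZmeas.comp measurable_fst).eval)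
  have step1 : ∀ ω, (∏ l, ENNReal.ofReal (Z ω l))
      = ∫⁻ u : Fin d → ℝ, A.indicator 1 (ω, u) := by
    intro ω
    have hslice : {u : Fin d → ℝ | (ω, u) ∈ A} = Set.univ.pi fun l => Set.Ico 0 (Z ω l) := by
      ext u; simp [hAdef, Set.mem_pi]
    have hsm : MeasurableSet {u : Fin d → ℝ | (ω, u) ∈ A} := by
      rw [hslice]; exact MeasurableSet.univ_pi fun l => measurableSet_Ico
    have : ∫⁻ u : Fin d → ℝ, A.indicator 1 (ω, u)
        = ∫⁻ u : Fin d → ℝ, ({u : Fin d → ℝ | (ω, u) ∈ A}).indicator 1 u := by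
      apply lintegral_congr; intro u
      by_cases h : (ω, u) ∈ A
      · rw [Set.indicator_of_mem h,
          Set.indicator_of_mem (show u ∈ {u : Fin d → ℝ | (ω, u) ∈ A} from h)]
        rfl
      · rw [Set.indicator_of_notMem h,
          Set.indicator_of_notMem (show u ∉ {u : Fin d → ℝ | (ω, u) ∈ A} from h)]
    rw [this, lintegral_indicator_one hsm, hslice, volume_pi_pi]
    simp [Real.volume_Ico]
  have step2 : ∫⁻ ω, ∏ l, ENNReal.ofReal (Z ω l) ∂P
      = ∫⁻ u : Fin d → ℝ, P {ω | (ω, u) ∈ A} := by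
    calc ∫⁻ ω, ∏ l, ENNReal.ofReal (Z ω l) ∂P
        = ∫⁻ ω, (∫⁻ u : Fin d → ℝ, A.indicator 1 (ω, u)) ∂P := lintegral_congr step1
      _ = ∫⁻ u : Fin d → ℝ, (∫⁻ ω, A.indicator 1 (ω, u) ∂P) := by
          apply lintegral_lintegral_swap
          exact ((measurable_one.indicator hA).comp
            (measurable_fst.prodMk measurable_snd)).aemeasurable
      _ = ∫⁻ u : Fin d → ℝ, P {ω | (ω, u) ∈ A} := by
          apply lintegral_congr; intro u
          have hsm : MeasurableSet {ω | (ω, u) ∈ A} :=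
            hA.preimage (measurable_id.prodMk measurable_const)
          rw [← lintegral_indicator_one hsm]
          apply lintegral_congr; intro ω
          by_cases h : (ω, u) ∈ A
          · rw [Set.indicator_of_mem h,
              Set.indicator_of_mem (show ω ∈ {ω | (ω, u) ∈ A} from h)]
            rfl
          · rw [Set.indicator_of_notMem h,
              Set.indicator_of_notMem (show ω ∉ {ω | (ω, u) ∈ A} from h)]
  have step3 : (∫⁻ u : Fin d → ℝ, Set.indicator
        {u : Fin d → ℝ | (∀ l, 0 ≤ u l) ∧ ∑ l, u l ≤ (1:ℝ)}
        (fun u => ENNReal.ofReal (((1:ℝ) - ∑ l, u l) ^ k)) u)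
      ≤ ∫⁻ u : Fin d → ℝ, P {ω | (ω, u) ∈ A} := by
    apply lintegral_mono
    intro u
    dsimp only
    by_cases h : u ∈ {u : Fin d → ℝ | (∀ l, 0 ≤ u l) ∧ ∑ l, u l ≤ (1:ℝ)}
    · rw [Set.indicator_of_mem h]
      obtain ⟨h1, h2⟩ := h
      have hset : {ω | (ω, u) ∈ A} = {ω | ∀ l, u l < Z ω l} := by
        ext ω; simp only [hAdef, Set.mem_setOf_eq, Set.mem_Ico]
        exact ⟨fun h l => (h l).2, fun h l => ⟨h1 l, h l⟩⟩
      rw [hset]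
      exact htail u h1 h2
    · rw [Set.indicator_of_notMem h]
      exact zero_le
  rw [step2]
  refine le_trans ?_ step3
  rw [simplexInt k d 1 (by norm_num)]
  apply le_of_eq
  congr 1
  have : m + d - 1 = k + d := by omega
  rw [this, one_pow, one_mul]
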